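/- For every odd integer n ≥ 9 with n ≡ 1 or 3 (mod 4), the graph H_n ∪ ((n−3)/2) K_1 is super edge-magic, where H_n is the wheel W_n minus a spoke; hence μ_s(H_n) ≤ (n−3)/2. -/
import Mathlib


open SimpleGraph

/-- A super edge-magic labeling of `G` with magic constant `k`: a bijection from
vertices and edges onto `{1, …, p+q}` sending vertices onto `{1, …, p}`, with
`f x + f (xy) + f y = k` for every edge `xy`. -/
def IsSEMWith {V : Type*} [Fintype V] (G : SimpleGraph V) (k : ℕ) : Prop :=
  ∃ (f : V → ℕ) (g : G.edgeSet → ℕ),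
    Function.Injective (Sum.elim f g) ∧
    Set.range (Sum.elim f g) = Set.Icc 1 (Fintype.card V + G.edgeSet.ncard) ∧
    Set.range f = Set.Icc 1 (Fintype.card V) ∧
    ∀ (x y : V) (h : G.Adj x y), f x + g ⟨s(x, y), G.mem_edgeSet.mpr h⟩ + f y = k

/-- `G` is super edge-magic. -/
def IsSEM {V : Type*} [Fintype V] (G : SimpleGraph V) : Prop :=
  ∃ k : ℕ, IsSEMWith G k

/-- The graph `G ∪ t K₁`: `G` together with `t` added isolated vertices. -/
def unionIsolated {V : Type*} (G : SimpleGraph V) (t : ℕ) : SimpleGraph (V ⊕ Fin t) :=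
  G.map Function.Embedding.inl

/-- The super edge-magic deficiency `μₛ(G)`: the least `t` such that `G ∪ t K₁`
is super edge-magic, or `⊤` if there is no such `t`. -/
noncomputable def semDeficiency {V : Type*} [Fintype V] (G : SimpleGraph V) : ℕ∞ :=
  sInf ((fun t : ℕ => (t : ℕ∞)) '' {t : ℕ | IsSEM (unionIsolated G t)})

/-- `H n`: the wheel `W_n` (hub `0`, rim `1, …, n`) minus the spoke `{0, 1}`. -/
def wheelMinusSpoke (n : ℕ) : SimpleGraph (Fin (n + 1)) :=
  SimpleGraph.fromRel (fun i j =>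
    ((i : ℕ) = 0 ∧ 2 ≤ (j : ℕ)) ∨
    ((j : ℕ) = (i : ℕ) + 1 ∧ 1 ≤ (i : ℕ)) ∨
    ((i : ℕ) = n ∧ (j : ℕ) = 1))

/-- The join `P_n + K̄_m`: a path `u_1 … u_n` plus `m` vertices joined to every `u_i`. -/
def pathJoin (n m : ℕ) : SimpleGraph (Fin n ⊕ Fin m) :=
  SimpleGraph.fromRel (fun a b =>
    (∃ i j : Fin n, a = Sum.inl i ∧ b = Sum.inl j ∧ (j : ℕ) = (i : ℕ) + 1) ∨
    (∃ (i : Fin n) (j : Fin m), a = Sum.inl i ∧ b = Sum.inr j))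

/-- The join `K_{1,n} + K̄_m`: a star with center `Sum.inl 0` and leaves
`Sum.inl i`, `i ≠ 0`, plus `m` vertices joined to all star vertices. -/
def starJoin (n m : ℕ) : SimpleGraph (Fin (n + 1) ⊕ Fin m) :=
  SimpleGraph.fromRel (fun a b =>
    (∃ i : Fin (n + 1), a = Sum.inl 0 ∧ b = Sum.inl i ∧ i ≠ 0) ∨
    (∃ (i : Fin (n + 1)) (j : Fin m), a = Sum.inl i ∧ b = Sum.inr j))

/-- The join `C_n + K̄_m`: a cycle `u_1 … u_n` plus `m` vertices joined to every `u_i`. -/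
def cycleJoin (n m : ℕ) : SimpleGraph (Fin n ⊕ Fin m) :=
  SimpleGraph.fromRel (fun a b =>
    (∃ i j : Fin n, a = Sum.inl i ∧ b = Sum.inl j ∧
      ((j : ℕ) = (i : ℕ) + 1 ∨ ((i : ℕ) = n - 1 ∧ (j : ℕ) = 0))) ∨
    (∃ (i : Fin n) (j : Fin m), a = Sum.inl i ∧ b = Sum.inr j))

/-- The join `G + K̄_m`: `G` plus `m` new vertices joined to every vertex of `G`. -/
def joinIsolated {V : Type*} (G : SimpleGraph V) (m : ℕ) : SimpleGraph (V ⊕ Fin m) :=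
  SimpleGraph.fromRel (fun a b =>
    (∃ x y : V, a = Sum.inl x ∧ b = Sum.inl y ∧ G.Adj x y) ∨
    (∃ (x : V) (j : Fin m), a = Sum.inl x ∧ b = Sum.inr j))

-- auxiliary definitions and lemmas

def fR (m i : ℕ) : ℕ :=
  if i = 0 then 3*m+1 else if i % 2 = 1 then (i+1)/2 else m+1+i/2

lemma fR_inj {m i j : ℕ} (hm : 1 ≤ m) (hi : i ≤ 2*m+1) (hj : j ≤ 2*m+1)
    (h : fR m i = fR m j) : i = j := by
  unfold fR at h; split_ifs at h <;> first | contradiction | omega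

lemma fR_cases {m i : ℕ} (hm : 1 ≤ m) (hi : i ≤ 2*m+1) :
    (i = 0 ∧ fR m i = 3*m+1) ∨ (1 ≤ i ∧ 1 ≤ fR m i ∧ fR m i ≤ 2*m+1) := by
  unfold fR; split_ifs <;> first | contradiction | omega

lemma fR_rim {m i : ℕ} (h1 : 1 ≤ i) (h2 : i ≤ 2*m) : fR m i + fR m (i+1) = m+2+i := by
  unfold fR; split_ifs <;> first | contradiction | omega

lemma fR_last (m : ℕ) (hm : 1 ≤ m) : fR m (2*m+1) + fR m 1 = m + 2 := by
  unfold fR; split_ifs <;> first | contradiction | omega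

lemma fR_spoke {m i : ℕ} (h1 : 2 ≤ i) (h2 : i ≤ 2*m+1) : 2 ≤ fR m i ∧ fR m i ≤ 2*m+1 := by
  unfold fR; split_ifs <;> first | contradiction | omega

lemma fR_surj {m v : ℕ} (h1 : 2 ≤ v) (h2 : v ≤ 2*m+1) :
    ∃ i, 2 ≤ i ∧ i ≤ 2*m+1 ∧ fR m i = v := by
  rcases le_or_gt v (m+1) with h | h
  · exact ⟨2*v-1, by omega, by omega, by unfold fR; split_ifs <;> first | contradiction | omega⟩
  · exact ⟨2*v-2*m-2, by omega, by omega, by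
      unfold fR; split_ifs <;> first | contradiction | omega⟩

def sumPair {V : Type*} (f : V → ℕ) : Sym2 V → ℕ :=
  Sym2.lift ⟨fun x y => f x + f y, fun _ _ => Nat.add_comm _ _⟩

lemma sumPair_mk {V : Type*} (f : V → ℕ) (x y : V) : sumPair f s(x, y) = f x + f y := rfl

lemma sumPair_congr {α : Type*} (f : α → ℕ) {x y c d : α} (h : s(x,y) = s(c,d)) :
    f x + f y = f c + f d := by
  have := congrArg (sumPair f) h
  rwa [sumPair_mk, sumPair_mk] at this

lemma sym2_rep {α : Type*} (e : Sym2 α) : ∃ x y, e = s(x, y) :=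
  Sym2.ind (fun x y => ⟨x, y, rfl⟩) e

lemma semGen {V : Type*} [Fintype V] (G : SimpleGraph V) (f : V → ℕ) (a b : ℕ)
    (hf : Function.Injective f)
    (hfm : ∀ v, f v ∈ Set.Icc 1 (Fintype.card V))
    (hinj : Set.InjOn (sumPair f) G.edgeSet)
    (hrange : sumPair f '' G.edgeSet = Set.Icc a b)
    (ha : 1 ≤ a) :
    IsSEMWith G (Fintype.card V + b + 1) := by
  classical
  set p := Fintype.card V with hp
  have hq : G.edgeSet.ncard = b + 1 - a := by
    rw [← Set.ncard_image_of_injOn hinj, hrange, ← Finset.coe_Icc, Set.ncard_coe_finset,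
      Nat.card_Icc]
  have hmem : ∀ e : G.edgeSet, sumPair f e.1 ∈ Set.Icc a b := by
    intro e; rw [← hrange]; exact ⟨e.1, e.2, rfl⟩
  set g : G.edgeSet → ℕ := fun e => p + b + 1 - sumPair f e.1 with hgdef
  have hgmem : ∀ e : G.edgeSet, p + 1 ≤ g e ∧ g e ≤ p + b + 1 - a := by
    intro e
    have := hmem e
    rw [Set.mem_Icc] at this
    constructor <;> simp only [hgdef] <;> omega
  have hfsurj : ∀ w, 1 ≤ w → w ≤ p → ∃ v, f v = w := by
    intro w h1 h2
    have himg : Finset.image f Finset.univ = Finset.Icc 1 p := by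
      apply Finset.eq_of_subset_of_card_le
      · intro w hw
        simp only [Finset.mem_image] at hw
        obtain ⟨v, _, rfl⟩ := hw
        have := hfm v
        rw [Set.mem_Icc] at this
        rw [Finset.mem_Icc]; exact this
      · rw [Nat.card_Icc, Finset.card_image_of_injective _ hf, Finset.card_univ]; omega
    have hw : w ∈ Finset.image f Finset.univ := by rw [himg, Finset.mem_Icc]; omega
    simp only [Finset.mem_image] at hw
    obtain ⟨v, _, hv⟩ := hw
    exact ⟨v, hv⟩
  have hfle : ∀ v, 1 ≤ f v ∧ f v ≤ p := by
    intro v; have := hfm v; rw [Set.mem_Icc] at this; exact this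
  refine ⟨f, g, ?_, ?_, ?_, ?_⟩
  · intro u v huv
    match u, v with
    | Sum.inl u, Sum.inl v => exact congrArg Sum.inl (hf huv)
    | Sum.inr u, Sum.inr v =>
      refine congrArg Sum.inr (Subtype.ext (hinj u.2 v.2 ?_))
      simp only [Sum.elim_inr, hgdef] at huv
      have h1 := hmem u; have h2 := hmem v
      rw [Set.mem_Icc] at h1 h2
      omega
    | Sum.inl u, Sum.inr v =>
      exfalso
      simp only [Sum.elim_inl, Sum.elim_inr] at huv
      have := (hfle u).2; have := (hgmem v).1
      omega
    | Sum.inr u, Sum.inl v =>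
      exfalso
      simp only [Sum.elim_inl, Sum.elim_inr] at huv
      have := (hfle v).2; have := (hgmem u).1
      omega
  · rw [hq]
    ext w
    simp only [Set.mem_range, Set.mem_Icc]
    constructor
    · rintro ⟨u, rfl⟩
      match u with
      | Sum.inl v =>
        have := hfle v
        simp only [Sum.elim_inl]
        omega
      | Sum.inr e =>
        have := hgmem e
        simp only [Sum.elim_inr]
        omega
    · rintro ⟨h1, h2⟩
      rcases le_or_gt w p with h | h
      · obtain ⟨v, hv⟩ := hfsurj w h1 h
        exact ⟨Sum.inl v, hv⟩
      · have hr : p + b + 1 - w ∈ Set.Icc a b := by rw [Set.mem_Icc]; omega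
        rw [← hrange] at hr
        obtain ⟨e, he, hev⟩ := hr
        refine ⟨Sum.inr ⟨e, he⟩, ?_⟩
        simp only [Sum.elim_inr, hgdef, hev]
        omega
  · ext w
    simp only [Set.mem_range, Set.mem_Icc]
    constructor
    · rintro ⟨v, rfl⟩; exact hfle v
    · rintro ⟨h1, h2⟩
      exact hfsurj w h1 h2
  · intro x y hxy
    have := hmem ⟨s(x, y), G.mem_edgeSet.mpr hxy⟩
    rw [Set.mem_Icc, sumPair_mk] at this
    simp only [hgdef, sumPair_mk]
    omega

lemma wms_adj {n : ℕ} {x y : Fin (n+1)} :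
    (wheelMinusSpoke n).Adj x y ↔ x ≠ y ∧
      ((((x:ℕ) = 0 ∧ 2 ≤ (y:ℕ)) ∨ ((y:ℕ) = (x:ℕ)+1 ∧ 1 ≤ (x:ℕ)) ∨ ((x:ℕ) = n ∧ (y:ℕ) = 1)) ∨
       (((y:ℕ) = 0 ∧ 2 ≤ (x:ℕ)) ∨ ((x:ℕ) = (y:ℕ)+1 ∧ 1 ≤ (y:ℕ)) ∨ ((y:ℕ) = n ∧ (x:ℕ) = 1))) :=
  SimpleGraph.fromRel_adj _ x y

lemma classify {n m : ℕ} (hn : n = 2*m+1) {x y : Fin (n+1)}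
    (h : (wheelMinusSpoke n).Adj x y) :
    (∃ z : Fin (n+1), 2 ≤ (z:ℕ) ∧ s(x,y) = s((⟨0, by omega⟩ : Fin (n+1)), z)) ∨
    (∃ z w : Fin (n+1), 1 ≤ (z:ℕ) ∧ (z:ℕ) ≤ 2*m ∧ (w:ℕ) = (z:ℕ)+1 ∧ s(x,y) = s(z, w)) ∨
    s(x,y) = s((⟨2*m+1, by omega⟩ : Fin (n+1)), (⟨1, by omega⟩ : Fin (n+1))) := by
  rw [wms_adj] at h
  have hx := x.isLt
  have hy := y.isLt
  obtain ⟨hne, (⟨h1, h2⟩ | ⟨h1, h2⟩ | ⟨h1, h2⟩) | (⟨h1, h2⟩ | ⟨h1, h2⟩ | ⟨h1, h2⟩)⟩ := h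
  · left
    exact ⟨y, h2, by rw [show x = ⟨0, by omega⟩ from Fin.ext h1]⟩
  · right; left
    exact ⟨x, y, h2, by omega, h1, rfl⟩
  · right; right
    rw [show x = ⟨2*m+1, by omega⟩ from Fin.ext (show (x:ℕ) = 2*m+1 by omega),
        show y = ⟨1, by omega⟩ from Fin.ext (show (y:ℕ) = 1 by omega)]
  · left
    exact ⟨x, h2, by rw [show y = ⟨0, by omega⟩ from Fin.ext h1, Sym2.eq_swap]⟩
  · right; left
    exact ⟨y, x, h2, by omega, h1, Sym2.eq_swap⟩
  · right; right
    rw [show y = ⟨2*m+1, by omega⟩ from Fin.ext (show (y:ℕ) = 2*m+1 by omega),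
        show x = ⟨1, by omega⟩ from Fin.ext (show (x:ℕ) = 1 by omega), Sym2.eq_swap]

lemma sum_eq {n m : ℕ} (hn : n = 2*m+1) (hm : 4 ≤ m) {x y x' y' : Fin (n+1)}
    (h : (wheelMinusSpoke n).Adj x y) (h' : (wheelMinusSpoke n).Adj x' y')
    (hs : fR m (x:ℕ) + fR m (y:ℕ) = fR m (x':ℕ) + fR m (y':ℕ)) : s(x,y) = s(x',y') := by
  have h0 : fR m 0 = 3*m+1 := rfl
  rcases classify hn h with ⟨z, hz, he⟩ | ⟨z, w, hz1, hz2, hw, he⟩ | he <;>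
    rcases classify hn h' with ⟨z', hz', he'⟩ | ⟨z', w', hz1', hz2', hw', he'⟩ | he'
  · -- spoke / spoke
    have e1 : fR m (x:ℕ) + fR m (y:ℕ) = fR m 0 + fR m (z:ℕ) :=
      sumPair_congr (fun i : Fin (n+1) => fR m (i:ℕ)) he
    have e2 : fR m (x':ℕ) + fR m (y':ℕ) = fR m 0 + fR m (z':ℕ) :=
      sumPair_congr (fun i : Fin (n+1) => fR m (i:ℕ)) he'
    have hff : fR m (z:ℕ) = fR m (z':ℕ) := by omega
    have hzz : z = z' := Fin.ext (fR_inj (by omega) (by have := z.isLt; omega)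
      (by have := z'.isLt; omega) hff)
    rw [he, he', hzz]
  · -- spoke / rim
    exfalso
    have e1 : fR m (x:ℕ) + fR m (y:ℕ) = fR m 0 + fR m (z:ℕ) :=
      sumPair_congr (fun i : Fin (n+1) => fR m (i:ℕ)) he
    have e2 : fR m (x':ℕ) + fR m (y':ℕ) = fR m (z':ℕ) + fR m ((w':ℕ)) :=
      sumPair_congr (fun i : Fin (n+1) => fR m (i:ℕ)) he'
    rw [hw'] at e2
    have hrim := fR_rim hz1' hz2'
    have hsp := (fR_spoke (m := m) hz (by have := z.isLt; omega)).1
    omega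
  · -- spoke / last
    exfalso
    have e1 : fR m (x:ℕ) + fR m (y:ℕ) = fR m 0 + fR m (z:ℕ) :=
      sumPair_congr (fun i : Fin (n+1) => fR m (i:ℕ)) he
    have e2 : fR m (x':ℕ) + fR m (y':ℕ) = fR m (2*m+1) + fR m 1 :=
      sumPair_congr (fun i : Fin (n+1) => fR m (i:ℕ)) he'
    have hlast := fR_last m (by omega)
    have hsp := (fR_spoke (m := m) hz (by have := z.isLt; omega)).1
    omega
  · -- rim / spoke
    exfalso
    have e1 : fR m (x:ℕ) + fR m (y:ℕ) = fR m (z:ℕ) + fR m ((w:ℕ)) :=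
      sumPair_congr (fun i : Fin (n+1) => fR m (i:ℕ)) he
    rw [hw] at e1
    have e2 : fR m (x':ℕ) + fR m (y':ℕ) = fR m 0 + fR m (z':ℕ) :=
      sumPair_congr (fun i : Fin (n+1) => fR m (i:ℕ)) he'
    have hrim := fR_rim hz1 hz2
    have hsp := (fR_spoke (m := m) hz' (by have := z'.isLt; omega)).1
    omega
  · -- rim / rim
    have e1 : fR m (x:ℕ) + fR m (y:ℕ) = fR m (z:ℕ) + fR m ((w:ℕ)) :=
      sumPair_congr (fun i : Fin (n+1) => fR m (i:ℕ)) he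
    rw [hw] at e1
    have e2 : fR m (x':ℕ) + fR m (y':ℕ) = fR m (z':ℕ) + fR m ((w':ℕ)) :=
      sumPair_congr (fun i : Fin (n+1) => fR m (i:ℕ)) he'
    rw [hw'] at e2
    have hr1 := fR_rim hz1 hz2
    have hr2 := fR_rim hz1' hz2'
    have hvv : (z:ℕ) = (z':ℕ) := by omega
    have hzz : z = z' := Fin.ext hvv
    have hww : w = w' := Fin.ext (by omega)
    rw [he, he', hzz, hww]
  · -- rim / last
    exfalso
    have e1 : fR m (x:ℕ) + fR m (y:ℕ) = fR m (z:ℕ) + fR m ((w:ℕ)) :=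
      sumPair_congr (fun i : Fin (n+1) => fR m (i:ℕ)) he
    rw [hw] at e1
    have e2 : fR m (x':ℕ) + fR m (y':ℕ) = fR m (2*m+1) + fR m 1 :=
      sumPair_congr (fun i : Fin (n+1) => fR m (i:ℕ)) he'
    have hrim := fR_rim hz1 hz2
    have hlast := fR_last m (by omega)
    omega
  · -- last / spoke
    exfalso
    have e1 : fR m (x:ℕ) + fR m (y:ℕ) = fR m (2*m+1) + fR m 1 :=
      sumPair_congr (fun i : Fin (n+1) => fR m (i:ℕ)) he
    have e2 : fR m (x':ℕ) + fR m (y':ℕ) = fR m 0 + fR m (z':ℕ) :=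
      sumPair_congr (fun i : Fin (n+1) => fR m (i:ℕ)) he'
    have hlast := fR_last m (by omega)
    have hsp := (fR_spoke (m := m) hz' (by have := z'.isLt; omega)).1
    omega
  · -- last / rim
    exfalso
    have e1 : fR m (x:ℕ) + fR m (y:ℕ) = fR m (2*m+1) + fR m 1 :=
      sumPair_congr (fun i : Fin (n+1) => fR m (i:ℕ)) he
    have e2 : fR m (x':ℕ) + fR m (y':ℕ) = fR m (z':ℕ) + fR m ((w':ℕ)) :=
      sumPair_congr (fun i : Fin (n+1) => fR m (i:ℕ)) he'
    rw [hw'] at e2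
    have hrim := fR_rim hz1' hz2'
    have hlast := fR_last m (by omega)
    omega
  · -- last / last
    rw [he, he']

lemma sum_bound {n m : ℕ} (hn : n = 2*m+1) (hm : 4 ≤ m) {x y : Fin (n+1)}
    (h : (wheelMinusSpoke n).Adj x y) :
    m+2 ≤ fR m (x:ℕ) + fR m (y:ℕ) ∧ fR m (x:ℕ) + fR m (y:ℕ) ≤ 5*m+2 := by
  have h0 : fR m 0 = 3*m+1 := rfl
  rcases classify hn h with ⟨z, hz, he⟩ | ⟨z, w, hz1, hz2, hw, he⟩ | he
  · have e1 : fR m (x:ℕ) + fR m (y:ℕ) = fR m 0 + fR m (z:ℕ) :=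
      sumPair_congr (fun i : Fin (n+1) => fR m (i:ℕ)) he
    have hsp := fR_spoke (m := m) hz (by have := z.isLt; omega)
    omega
  · have e1 : fR m (x:ℕ) + fR m (y:ℕ) = fR m (z:ℕ) + fR m ((w:ℕ)) :=
      sumPair_congr (fun i : Fin (n+1) => fR m (i:ℕ)) he
    rw [hw] at e1
    have hrim := fR_rim hz1 hz2
    omega
  · have e1 : fR m (x:ℕ) + fR m (y:ℕ) = fR m (2*m+1) + fR m 1 :=
      sumPair_congr (fun i : Fin (n+1) => fR m (i:ℕ)) he
    have hlast := fR_last m (by omega)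
    omega

lemma sum_surj {n m : ℕ} (hn : n = 2*m+1) (hm : 4 ≤ m) {r : ℕ}
    (h1 : m+2 ≤ r) (h2 : r ≤ 5*m+2) :
    ∃ x y : Fin (n+1), (wheelMinusSpoke n).Adj x y ∧ fR m (x:ℕ) + fR m (y:ℕ) = r := by
  have h0 : fR m 0 = 3*m+1 := rfl
  rcases Nat.lt_or_ge r (m+3) with hr | hr
  · -- r = m + 2 : the edge x_n x_1
    refine ⟨⟨2*m+1, by omega⟩, ⟨1, by omega⟩, ?_, ?_⟩
    · rw [wms_adj]
      refine ⟨?_, Or.inl (Or.inr (Or.inr ⟨show 2*m+1 = n by omega, show (1:ℕ) = 1 from rfl⟩))⟩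
      intro hc
      have : 2*m+1 = 1 := congrArg Fin.val hc
      omega
    · show fR m (2*m+1) + fR m 1 = r
      have := fR_last m (by omega)
      omega
  · rcases Nat.lt_or_ge r (3*m+3) with hr2 | hr2
    · -- rim edge (i, i+1) with i = r - m - 2
      refine ⟨⟨r-m-2, by omega⟩, ⟨r-m-1, by omega⟩, ?_, ?_⟩
      · rw [wms_adj]
        refine ⟨?_, Or.inl (Or.inr (Or.inl ⟨show r-m-1 = (r-m-2)+1 by omega,
          show 1 ≤ r-m-2 by omega⟩))⟩
        intro hc
        have : r-m-2 = r-m-1 := congrArg Fin.val hc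
        omega
      · show fR m (r-m-2) + fR m (r-m-1) = r
        have := fR_rim (m := m) (i := r-m-2) (by omega) (by omega)
        have hh : r-m-2+1 = r-m-1 := by omega
        rw [hh] at this
        omega
    · -- spoke edge (0, i)
      obtain ⟨i, hi1, hi2, hi3⟩ := fR_surj (m := m) (v := r - 3*m - 1) (by omega) (by omega)
      refine ⟨⟨0, by omega⟩, ⟨i, by omega⟩, ?_, ?_⟩
      · rw [wms_adj]
        refine ⟨?_, Or.inl (Or.inl ⟨rfl, show 2 ≤ i from hi1⟩)⟩
        intro hc
        have : 0 = i := congrArg Fin.val hc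
        omega
      · show fR m 0 + fR m i = r
        omega

lemma union_edge {V : Type*} {t : ℕ} {G : SimpleGraph V} {e : Sym2 (V ⊕ Fin t)}
    (he : e ∈ (unionIsolated G t).edgeSet) :
    ∃ x y, G.Adj x y ∧ e = s(Sum.inl x, Sum.inl y) := by
  obtain ⟨a, b, rfl⟩ := sym2_rep e
  rw [SimpleGraph.mem_edgeSet] at he
  rw [unionIsolated, SimpleGraph.map_adj] at he
  obtain ⟨x, y, hxy, hx, hy⟩ := he
  exact ⟨x, y, hxy, by rw [← hx, ← hy]; rfl⟩

lemma union_adj {V : Type*} {t : ℕ} {G : SimpleGraph V} {x y : V} (h : G.Adj x y) :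
    (unionIsolated G t).Adj (Sum.inl x) (Sum.inl y) := by
  rw [unionIsolated, SimpleGraph.map_adj]
  exact ⟨x, y, h, rfl, rfl⟩

lemma mainSEM {n t m : ℕ} (hn : n = 2*m+1) (ht : t = m-1) (hm : 4 ≤ m) :
    IsSEMWith (unionIsolated (wheelMinusSpoke n) t) (8*m+4) := by
  classical
  have hcard : Fintype.card (Fin (n+1) ⊕ Fin t) = 3*m+1 := by
    simp only [Fintype.card_sum, Fintype.card_fin]; omega
  have hkey := semGen (unionIsolated (wheelMinusSpoke n) t)
      (Sum.elim (fun i : Fin (n+1) => fR m (i:ℕ)) (fun j : Fin t => 2*m+2+(j:ℕ)))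
      (m+2) (5*m+2) ?_ ?_ ?_ ?_ (by omega)
  · rw [hcard] at hkey
    have hkk : 3*m+1 + (5*m+2) + 1 = 8*m+4 := by omega
    rwa [hkk] at hkey
  · -- injective
    intro u v huv
    match u, v with
    | Sum.inl u, Sum.inl v =>
      simp only [Sum.elim_inl] at huv
      exact congrArg Sum.inl (Fin.ext (fR_inj (by omega) (by have := u.isLt; omega)
        (by have := v.isLt; omega) huv))
    | Sum.inr u, Sum.inr v =>
      simp only [Sum.elim_inr] at huv
      exact congrArg Sum.inr (Fin.ext (by omega))
    | Sum.inl u, Sum.inr v =>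
      exfalso
      simp only [Sum.elim_inl, Sum.elim_inr] at huv
      rcases fR_cases (m := m) (i := (u:ℕ)) (by omega) (by have := u.isLt; omega) with h | h <;>
        · have := v.isLt; omega
    | Sum.inr u, Sum.inl v =>
      exfalso
      simp only [Sum.elim_inl, Sum.elim_inr] at huv
      rcases fR_cases (m := m) (i := (v:ℕ)) (by omega) (by have := v.isLt; omega) with h | h <;>
        · have := u.isLt; omega
  · -- bounds
    intro v
    rw [hcard, Set.mem_Icc]
    match v with
    | Sum.inl u =>
      simp only [Sum.elim_inl]
      rcases fR_cases (m := m) (i := (u:ℕ)) (by omega) (by have := u.isLt; omega) with h | h <;>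
        omega
    | Sum.inr u =>
      simp only [Sum.elim_inr]
      have := u.isLt
      omega
  · -- InjOn sumPair
    intro e he e' he' hsum
    obtain ⟨x, y, hxy, rfl⟩ := union_edge he
    obtain ⟨x', y', hxy', rfl⟩ := union_edge he'
    rw [sumPair_mk, sumPair_mk] at hsum
    simp only [Sum.elim_inl] at hsum
    have hss := sum_eq hn hm hxy hxy' hsum
    have h2 := congrArg (Sym2.map (Sum.inl : Fin (n+1) → Fin (n+1) ⊕ Fin t)) hss
    rwa [Sym2.map_pair_eq, Sym2.map_pair_eq] at h2
  · -- range
    ext r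
    simp only [Set.mem_image, Set.mem_Icc]
    constructor
    · rintro ⟨e, he, rfl⟩
      obtain ⟨x, y, hxy, rfl⟩ := union_edge he
      rw [sumPair_mk]
      simp only [Sum.elim_inl]
      exact sum_bound hn hm hxy
    · rintro ⟨hr1, hr2⟩
      obtain ⟨x, y, hxy, hv⟩ := sum_surj hn hm hr1 hr2
      refine ⟨s(Sum.inl x, Sum.inl y), (unionIsolated (wheelMinusSpoke n) t).mem_edgeSet.mpr
        (union_adj hxy), ?_⟩
      rw [sumPair_mk]
      simpa using hv

/-- for every odd `n ≥ 9` with `n ≡ 1, 3 (mod 4)`, the graph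
`H_n ∪ ((n−3)/2) K₁` is super edge-magic; hence `μₛ(H_n) ≤ (n−3)/2`. -/
theorem stmt5 (n : ℕ) (hn : 9 ≤ n) (hmod : n % 4 = 1 ∨ n % 4 = 3) :
    IsSEM (unionIsolated (wheelMinusSpoke n) ((n - 3) / 2)) ∧
    semDeficiency (wheelMinusSpoke n) ≤ (((n - 3) / 2 : ℕ) : ℕ∞) := by
  obtain ⟨m, hm, rfl⟩ : ∃ m, 4 ≤ m ∧ n = 2*m+1 := ⟨(n-1)/2, by omega, by omega⟩
  have hsem : IsSEM (unionIsolated (wheelMinusSpoke (2*m+1)) ((2*m+1-3)/2)) :=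
    ⟨8*m+4, mainSEM rfl (by omega) hm⟩
  exact ⟨hsem, sInf_le ⟨(2*m+1-3)/2, hsem, rfl⟩⟩
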